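/- For any graphs G and H, the twins-free clique number satisfies ϖ(G ⊕ H) ≥ ϖ(G) · ϖ(H). -/

import Mathlib

open SimpleGraph

/-- The Cartesian sum (disjunctive product) of two simple graphs. -/
def cartSum {α β : Type*} (G : SimpleGraph α) (H : SimpleGraph β) :
    SimpleGraph (α × β) where
  Adj x y := G.Adj x.1 y.1 ∨ H.Adj x.2 y.2
  symm := by
    constructor
    intro x y h
    exact h.imp (fun h' => h'.symm) (fun h' => h'.symm)
  loopless := by
    constructor
    intro x h
    exact h.elim (fun h' => h'.ne rfl) (fun h' => h'.ne rfl)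

/-- Two vertices are true twins if they are distinct and have equal closed
neighborhoods. -/
def TrueTwins {α : Type*} (G : SimpleGraph α) (u v : α) : Prop :=
  u ≠ v ∧ ∀ w, (G.Adj u w ∨ u = w) ↔ (G.Adj v w ∨ v = w)

/-- A twins-free clique: a clique containing no pair of true twins. -/
def IsTFClique {α : Type*} (G : SimpleGraph α) (s : Finset α) : Prop :=
  G.IsClique ↑s ∧ ∀ u ∈ s, ∀ v ∈ s, ¬ TrueTwins G u v

/-- The twins-free clique number. -/
noncomputable def tfCliqueNum {α : Type*} (G : SimpleGraph α) [Fintype α] : ℕ :=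
  sSup {n | ∃ s : Finset α, IsTFClique G s ∧ s.card = n}

/-- A strong resolving set: every pair of distinct vertices is strongly
resolved by some vertex of `S`. -/
def IsStrongResolvingSet {α : Type*} (G : SimpleGraph α) (S : Set α) : Prop :=
  ∀ u v : α, u ≠ v → ∃ w ∈ S,
    G.dist w u = G.dist w v + G.dist v u ∨ G.dist w v = G.dist w u + G.dist u v

/-- The strong metric dimension of a graph. -/
noncomputable def sdim {α : Type*} (G : SimpleGraph α) [Fintype α] : ℕ :=
  sInf {n | ∃ S : Finset α, IsStrongResolvingSet G ↑S ∧ S.card = n}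

/-- A vertex is isolated if it has no neighbors. -/
def IsIsolated {α : Type*} (G : SimpleGraph α) (u : α) : Prop :=
  ∀ w, ¬ G.Adj u w

lemma tf_empty {α : Type*} (G : SimpleGraph α) : IsTFClique G ∅ := by
  constructor
  · simp [SimpleGraph.isClique_iff, Set.Pairwise]
  · intro u hu; simp at hu

lemma tf_bdd {α : Type*} [Fintype α] (G : SimpleGraph α) :
    BddAbove {n | ∃ s : Finset α, IsTFClique G s ∧ s.card = n} := by
  refine ⟨Fintype.card α, ?_⟩
  rintro n ⟨s, _, rfl⟩
  simpa using s.card_le_univ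

lemma exists_tf {α : Type*} [Fintype α] (G : SimpleGraph α) :
    ∃ s : Finset α, IsTFClique G s ∧ s.card = tfCliqueNum G := by
  have hne : {n | ∃ s : Finset α, IsTFClique G s ∧ s.card = n}.Nonempty :=
    ⟨0, ∅, tf_empty G, rfl⟩
  exact Nat.sSup_mem hne (tf_bdd G)

/-- `ϖ(G ⊕ H) ≥ ϖ(G) · ϖ(H)`. -/
theorem tfCliqueNum_cartSum_ge {α β : Type*} [Fintype α] [Fintype β]
    (G : SimpleGraph α) (H : SimpleGraph β) :
    tfCliqueNum G * tfCliqueNum H ≤ tfCliqueNum (cartSum G H) := by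
  obtain ⟨s, hs, hscard⟩ := exists_tf G
  obtain ⟨t, ht, htcard⟩ := exists_tf H
  have hTF : IsTFClique (cartSum G H) (s ×ˢ t) := by
    constructor
    · intro x hx y hy hxy
      rw [Finset.coe_product, Set.mem_prod] at hx hy
      by_cases h1 : x.1 = y.1
      · have h2 : x.2 ≠ y.2 := fun h2 => hxy (Prod.ext h1 h2)
        exact Or.inr (ht.1 hx.2 hy.2 h2)
      · exact Or.inl (hs.1 hx.1 hy.1 h1)
    · rintro u hu v hv ⟨hne, hN⟩
      rw [Finset.mem_product] at hu hv
      by_cases h1 : u.1 = v.1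
      · have h2 : u.2 ≠ v.2 := fun h2 => hne (Prod.ext h1 h2)
        refine ht.2 u.2 hu.2 v.2 hv.2 ⟨h2, fun w2 => ?_⟩
        have := hN (u.1, w2)
        simp only [cartSum, Prod.ext_iff, ← h1, SimpleGraph.irrefl,
          false_or, true_and] at this
        exact this
      · have hadj : G.Adj u.1 v.1 := hs.1 hu.1 hv.1 h1
        by_cases h2 : u.2 = v.2
        · refine hs.2 u.1 hu.1 v.1 hv.1 ⟨h1, fun w1 => ?_⟩
          have := hN (w1, u.2)
          simp only [cartSum, Prod.ext_iff, ← h2, SimpleGraph.irrefl,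
            or_false, and_true] at this
          exact this
        · refine ht.2 u.2 hu.2 v.2 hv.2 ⟨h2, fun w2 => ?_⟩
          have hA := hN (v.1, w2)
          have hB := hN (u.1, w2)
          simp only [cartSum, Prod.ext_iff, SimpleGraph.irrefl] at hA hB
          have hAv : H.Adj v.2 w2 ∨ v.2 = w2 := by
            have := hA.mp (Or.inl (Or.inl hadj))
            rcases this with (h | h) | h
            · exact h.elim
            · exact Or.inl h
            · exact Or.inr h.2
          have hBu : H.Adj u.2 w2 ∨ u.2 = w2 := by
            have := hB.mpr (Or.inl (Or.inl hadj.symm))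
            rcases this with (h | h) | h
            · exact h.elim
            · exact Or.inl h
            · exact Or.inr h.2
          exact iff_of_true hBu hAv
  have : (s ×ˢ t).card = tfCliqueNum G * tfCliqueNum H := by
    rw [Finset.card_product, hscard, htcard]
  rw [← this]
  exact le_csSup (tf_bdd _) ⟨s ×ˢ t, hTF, rfl⟩
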